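/- Let p, r be positive integers and define the p-Catalan numbers by ₚc₀ = 1 and ₚc_k = (1/k)·C(p·k, k−1) for k ≥ 1. Then for every positive integer n, the 'vertical' and 'horizontal' decompositions of the Raney number agree: Σ_λ C(r, λ₁)·C(p·λ₁, λ₂)···C(p·λ_{j-1}, λ_j), summed over all compositions λ = (λ₁, …, λ_j) of n into positive parts, equals Σ ₚc_{i₁}·ₚc_{i₂}···ₚc_{i_r}, summed over all r-tuples (i₁, …, i_r) of nonnegative integers with i₁ + ⋯ + i_r = n. (The equality may be read in the rational numbers.) -/

import Mathlib

/-- The product `C(prev, λ₁) · C(p·λ₁, λ₂) · ⋯ · C(p·λ_{j-1}, λ_j)` along a list of parts,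
where the first binomial's top is `prev` and each subsequent top is `p` times the
previous part. -/
def raneyChainProd (p : ℕ) : ℕ → List ℕ → ℕ
  | _, [] => 1
  | prev, a :: t => prev.choose a * raneyChainProd p (p * a) t

/-- The `p`-Catalan numbers: `ₚc₀ = 1` and `ₚc_k = (1/k)·C(p·k, k-1)` for `k ≥ 1`. -/
def pCatalan (p : ℕ) : ℕ → ℚ
  | 0 => 1
  | k + 1 => (1 / (k + 1 : ℚ)) * ((p * (k + 1)).choose k)

open PowerSeries Finset

/-- The generating function of the `p`-Catalan numbers. -/
noncomputable def raneyF (p : ℕ) : PowerSeries ℚ := PowerSeries.mk (pCatalan p)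

/-- Raney numbers, extended so that `raneyQ p r 0 = 1`. -/
noncomputable def raneyQ (p r n : ℕ) : ℚ :=
  if n = 0 then 1 else (r : ℚ) / (n * p + r) * ((n * p + r).choose n)

lemma raneyQ_zero (p r : ℕ) : raneyQ p r 0 = 1 := rfl

lemma raneyQ_zero_left (p n : ℕ) (hn : n ≠ 0) : raneyQ p 0 n = 0 := by
  simp [raneyQ, hn]

lemma pCatalan_succ_eq_raneyQ (p m : ℕ) (hp : 0 < p) :
    pCatalan p (m + 1) = raneyQ p p m := by
  cases m with
  | zero => simp [pCatalan, raneyQ]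
  | succ k =>
      simp only [pCatalan, raneyQ, Nat.succ_ne_zero, if_false]
      have h2 : (k + 1) * p + p = p * (k + 1 + 1) := by ring
      rw [h2]
      push_cast
      have hp' : (p : ℚ) ≠ 0 := by positivity
      have hk : (k : ℚ) + 1 + 1 ≠ 0 := by positivity
      field_simp

/-- The Pascal-style recurrence for Raney numbers. -/
lemma raneyQ_rec (p r n : ℕ) (hp : 0 < p) :
    raneyQ p (r + 1) (n + 1) = raneyQ p r (n + 1) + raneyQ p (p + r) n := by
  have hp' : (0 : ℚ) < p := by exact_mod_cast hp
  have hn0 : (0 : ℚ) ≤ (n : ℚ) := Nat.cast_nonneg n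
  have hr0 : (0 : ℚ) ≤ (r : ℚ) := Nat.cast_nonneg r
  obtain ⟨mN, hmN⟩ : ∃ m, m = (n + 1) * p + r := ⟨_, rfl⟩
  have hmQ : (mN : ℚ) = ((n : ℚ) + 1) * p + r := by rw [hmN]; push_cast; ring
  have hm : (0 : ℚ) < (mN : ℚ) := by rw [hmQ]; nlinarith
  have hm0 : (mN : ℚ) ≠ 0 := ne_of_gt hm
  have hm1' : (mN : ℚ) + 1 ≠ 0 := by positivity
  have hleft : raneyQ p (r + 1) (n + 1)
      = ((r : ℚ) + 1) / ((mN : ℚ) + 1) * (((mN + 1).choose (n + 1) : ℕ) : ℚ) := by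
    have harg : (n + 1) * p + (r + 1) = mN + 1 := by rw [hmN]; ring
    simp only [raneyQ, Nat.succ_ne_zero, if_false]
    rw [harg]
    push_cast
    rw [hmQ]
    ring
  have hmid : raneyQ p r (n + 1)
      = (r : ℚ) / (mN : ℚ) * ((mN.choose (n + 1) : ℕ) : ℚ) := by
    have harg : (n + 1) * p + r = mN := hmN.symm
    simp only [raneyQ, Nat.succ_ne_zero, if_false]
    rw [harg]
    push_cast
    rw [hmQ]
  have hright : raneyQ p (p + r) n
      = ((p : ℚ) + r) / (mN : ℚ) * ((mN.choose n : ℕ) : ℚ) := by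
    cases n with
    | zero =>
        have h0 : mN = p + r := by rw [hmN]; ring
        rw [raneyQ_zero, h0, Nat.choose_zero_right]
        push_cast
        rw [div_self (by positivity)]
        norm_num
    | succ k =>
        have harg : (k + 1) * p + (p + r) = mN := by rw [hmN]; ring
        simp only [raneyQ, Nat.succ_ne_zero, if_false]
        rw [harg]
        have hmQ' : (mN : ℚ) = ((k : ℚ) + 1) * p + ((p : ℚ) + r) := by
          rw [hmQ]; push_cast; ring
        push_cast
        rw [hmQ']
  rw [hleft, hmid, hright]
  have h1 : (((mN + 1).choose (n + 1) : ℕ) : ℚ)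
      = ((mN.choose n : ℕ) : ℚ) + ((mN.choose (n + 1) : ℕ) : ℚ) := by
    exact_mod_cast congrArg (Nat.cast (R := ℚ)) (Nat.choose_succ_succ' mN n)
  have h2 : ((mN : ℚ) + 1) * ((mN.choose n : ℕ) : ℚ)
      = (((mN + 1).choose (n + 1) : ℕ) : ℚ) * ((n : ℚ) + 1) := by
    exact_mod_cast congrArg (Nat.cast (R := ℚ)) (Nat.add_one_mul_choose_eq mN n)
  have key : ((r : ℚ) + 1) * (((mN + 1).choose (n + 1) : ℕ) : ℚ) * (mN : ℚ)
      = ((r : ℚ) * ((mN.choose (n + 1) : ℕ) : ℚ)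
          + ((p : ℚ) + r) * ((mN.choose n : ℕ) : ℚ)) * ((mN : ℚ) + 1) := by
    linear_combination ((r : ℚ) * ((mN : ℚ) + 1)) * h1 + (-(p : ℚ)) * h2
      + (((mN + 1).choose (n + 1) : ℕ) : ℚ) * hmQ
  field_simp
  linear_combination key

/-- Splitting a sum over `antidiagonalTuple (r+1) n`. -/
lemma sum_antidiagonalTuple_succ {M : Type*} [AddCommMonoid M] (r n : ℕ)
    (g : (Fin (r + 1) → ℕ) → M) :
    ∑ f ∈ Finset.Nat.antidiagonalTuple (r + 1) n, g f
      = ∑ ab ∈ Finset.HasAntidiagonal.antidiagonal n, ∑ t ∈ Finset.Nat.antidiagonalTuple r ab.2,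
          g (Fin.cons ab.1 t) := by
  rw [← Finset.sum_sigma (Finset.HasAntidiagonal.antidiagonal n)
      (fun ab => Finset.Nat.antidiagonalTuple r ab.2) (fun x => g (Fin.cons x.1.1 x.2))]
  refine Finset.sum_nbij' (fun f => ⟨(f 0, ∑ i, Fin.tail f i), Fin.tail f⟩)
    (fun x => Fin.cons x.1.1 x.2) ?_ ?_ ?_ ?_ ?_
  · intro f hf
    rw [Finset.Nat.mem_antidiagonalTuple, Fin.sum_univ_succ] at hf
    simp only [Finset.mem_sigma, Finset.HasAntidiagonal.mem_antidiagonal, Finset.Nat.mem_antidiagonalTuple]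
    exact ⟨hf ▸ rfl, trivial⟩
  · rintro ⟨⟨a, b⟩, t⟩ hx
    simp only [Finset.mem_sigma, Finset.HasAntidiagonal.mem_antidiagonal,
      Finset.Nat.mem_antidiagonalTuple] at hx
    rw [Finset.Nat.mem_antidiagonalTuple, Fin.sum_univ_succ]
    simp only [Fin.cons_zero, Fin.cons_succ]
    rw [show (∑ i : Fin r, t i) = b from hx.2]
    exact hx.1
  · intro f _
    exact Fin.cons_self_tail f
  · rintro ⟨⟨a, b⟩, t⟩ hx
    simp only [Finset.mem_sigma, Finset.HasAntidiagonal.mem_antidiagonal,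
      Finset.Nat.mem_antidiagonalTuple] at hx
    simp only [Fin.cons_zero, Fin.tail_cons]
    rw [show (∑ i : Fin r, t i) = b from hx.2]
  · intro f _
    rw [Fin.cons_self_tail f]

lemma tupleSum_eq_coeff (p r n : ℕ) :
    ∑ f ∈ Finset.Nat.antidiagonalTuple r n, ∏ i, pCatalan p (f i)
      = PowerSeries.coeff n ((raneyF p) ^ r) := by
  induction r generalizing n with
  | zero =>
      cases n with
      | zero => simp
      | succ m => simp [PowerSeries.coeff_one]
  | succ r ih =>
      rw [sum_antidiagonalTuple_succ]
      rw [pow_succ', PowerSeries.coeff_mul]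
      apply Finset.sum_congr rfl
      intro ab _
      simp_rw [Fin.prod_univ_succ, Fin.cons_zero, Fin.cons_succ]
      rw [← Finset.mul_sum, ih ab.2]
      congr 1
      simp [raneyF]

/-- The closed form for the coefficients of powers of `raneyF`. -/
lemma coeff_raneyF_pow (p : ℕ) (hp : 0 < p) :
    ∀ n r, PowerSeries.coeff n ((raneyF p) ^ r) = raneyQ p r n := by
  intro n
  induction n using Nat.strong_induction_on with
  | _ n IH =>
    cases n with
    | zero =>
        intro r
        rw [raneyQ_zero, PowerSeries.coeff_zero_eq_constantCoeff, map_pow]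
        have h1 : PowerSeries.constantCoeff (raneyF p) = 1 := by
          have := PowerSeries.coeff_mk 0 (pCatalan p)
          rw [← PowerSeries.coeff_zero_eq_constantCoeff, raneyF, this]
          rfl
        rw [h1, one_pow]
    | succ m =>
        intro r
        induction r with
        | zero =>
            rw [pow_zero, PowerSeries.coeff_one, if_neg (Nat.succ_ne_zero m)]
            simp [raneyQ]
        | succ r ihr =>
            rw [pow_succ', PowerSeries.coeff_mul, Finset.Nat.sum_antidiagonal_succ]
            have hfirst : PowerSeries.coeff 0 (raneyF p) = 1 := by
              rw [raneyF, PowerSeries.coeff_mk]; rfl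
            have hsum : ∑ ab ∈ Finset.HasAntidiagonal.antidiagonal m,
                PowerSeries.coeff (ab.1 + 1) (raneyF p)
                  * PowerSeries.coeff ab.2 ((raneyF p) ^ r)
                = PowerSeries.coeff m ((raneyF p) ^ p * (raneyF p) ^ r) := by
              rw [PowerSeries.coeff_mul]
              apply Finset.sum_congr rfl
              intro ab hab
              have hab1 : ab.1 < m + 1 := by
                rw [Finset.HasAntidiagonal.mem_antidiagonal] at hab
                omega
              congr 1
              rw [raneyF, PowerSeries.coeff_mk, pCatalan_succ_eq_raneyQ p ab.1 hp,
                ← IH ab.1 hab1 p]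
              rfl
            rw [hfirst, one_mul, hsum, ← pow_add, IH m (Nat.lt_succ_self m) (p + r), ihr,
              raneyQ_rec p r m hp]

lemma raneyF_eq (p : ℕ) (hp : 0 < p) :
    raneyF p = 1 + PowerSeries.X * (raneyF p) ^ p := by
  ext n
  cases n with
  | zero =>
      rw [map_add, PowerSeries.coeff_one, if_pos rfl, PowerSeries.coeff_zero_X_mul, add_zero]
      rw [raneyF, PowerSeries.coeff_mk]
      rfl
  | succ m =>
      rw [map_add, PowerSeries.coeff_one, if_neg (Nat.succ_ne_zero m),
        PowerSeries.coeff_succ_X_mul, zero_add]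
      conv_lhs => rw [raneyF, PowerSeries.coeff_mk]
      rw [pCatalan_succ_eq_raneyQ p m hp, ← coeff_raneyF_pow p hp m p]

lemma coeff_one_aux (n : ℕ) (hn : 0 < n) : PowerSeries.coeff n (1 : PowerSeries ℚ) = 0 := by
  rw [PowerSeries.coeff_one, if_neg (Nat.pos_iff_ne_zero.mp hn)]

lemma coeff_raneyF_pow_rec (p r n : ℕ) (hp : 0 < p) (hn : 0 < n) :
    PowerSeries.coeff n ((raneyF p) ^ r)
      = ∑ a ∈ Finset.Icc 1 n, (r.choose a : ℚ) *
          PowerSeries.coeff (n - a) ((raneyF p) ^ (p * a)) := by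
  have hU : ∀ k, PowerSeries.coeff n
        ((PowerSeries.X * (raneyF p) ^ p) ^ k * 1 ^ (r - k) * (r.choose k : PowerSeries ℚ))
      = (r.choose k : ℚ) *
          (if k ≤ n then PowerSeries.coeff (n - k) ((raneyF p) ^ (p * k)) else 0) := by
    intro k
    rw [one_pow, mul_one, mul_pow, ← pow_mul,
      show ((r.choose k : ℕ) : PowerSeries ℚ) = PowerSeries.C ((r.choose k : ℕ) : ℚ) from
        (map_natCast (PowerSeries.C) _).symm,
      PowerSeries.coeff_mul_C, PowerSeries.coeff_X_pow_mul', mul_comm]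
  have key : PowerSeries.coeff n ((raneyF p) ^ r)
      = ∑ k ∈ Finset.range (r + 1), (r.choose k : ℚ) *
          (if k ≤ n then PowerSeries.coeff (n - k) ((raneyF p) ^ (p * k)) else 0) := by
    conv_lhs => rw [raneyF_eq p hp]
    rw [add_comm (1 : PowerSeries ℚ), add_pow, map_sum]
    exact Finset.sum_congr rfl fun k _ => hU k
  rw [key]
  set U : ℕ → ℚ := fun k => (r.choose k : ℚ) *
      (if k ≤ n then PowerSeries.coeff (n - k) ((raneyF p) ^ (p * k)) else 0) with hUdef
  have h1 : ∑ k ∈ Finset.range (r + 1), U k = ∑ k ∈ Finset.range (r + 1 + n), U k := by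
    apply Finset.sum_subset
    · intro k hk
      rw [Finset.mem_range] at hk ⊢
      omega
    · intro k _ hk
      rw [Finset.mem_range, not_lt] at hk
      have : r.choose k = 0 := Nat.choose_eq_zero_of_lt (by omega)
      simp [hUdef, this]
  have h2 : ∑ a ∈ Finset.Icc 1 n, (r.choose a : ℚ) *
        PowerSeries.coeff (n - a) ((raneyF p) ^ (p * a))
      = ∑ k ∈ Finset.range (r + 1 + n), U k := by
    apply Finset.sum_subset_zero_on_sdiff
    · intro a ha
      rw [Finset.mem_Icc] at ha
      rw [Finset.mem_range]
      omega
    · intro a ha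
      rw [Finset.mem_sdiff, Finset.mem_range, Finset.mem_Icc] at ha
      have ha' : a = 0 ∨ n < a := by omega
      rcases ha' with rfl | ha'
      · simp [hUdef, PowerSeries.coeff_one, hn.ne']
      · simp [hUdef, Nat.not_le.mpr ha']
    · intro a ha
      rw [Finset.mem_Icc] at ha
      simp [hUdef, ha.2]
  rw [h1, ← h2]

lemma composition_zero_blocks (c : Composition 0) : c.blocks = [] := by
  rcases h : c.blocks with _ | ⟨a, t⟩
  · rfl
  · have h1 := c.one_le_blocks (h ▸ (List.mem_cons_self (a := a) (l := t)))
    have hs := c.blocks_sum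
    rw [h] at hs
    simp only [List.sum_cons] at hs
    omega

lemma sum_composition_zero (g : List ℕ → ℚ) :
    ∑ c : Composition 0, g c.blocks = g [] := by
  haveI : Unique (Composition 0) :=
    ⟨⟨default⟩, fun c => Composition.ext (by
      rw [composition_zero_blocks]
      exact (composition_zero_blocks _).symm)⟩
  rw [Fintype.sum_unique, composition_zero_blocks]

lemma composition_blocks_cons {n : ℕ} (hn : 0 < n) (c : Composition n) :
    c.blocks = c.blocks.headI :: c.blocks.tail := by
  rcases h : c.blocks with _ | ⟨a, t⟩
  · exfalso
    have hs := c.blocks_sum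
    rw [h] at hs
    simp only [List.sum_nil] at hs
    omega
  · rfl

lemma composition_headI_pos {n : ℕ} (hn : 0 < n) (c : Composition n) :
    0 < c.blocks.headI :=
  c.blocks_pos (by rw [composition_blocks_cons hn c]; exact List.mem_cons_self)

lemma composition_headI_add_tail {n : ℕ} (hn : 0 < n) (c : Composition n) :
    c.blocks.headI + c.blocks.tail.sum = n :=
  calc c.blocks.headI + c.blocks.tail.sum
      = (c.blocks.headI :: c.blocks.tail).sum := by simp
    _ = c.blocks.sum := by rw [← composition_blocks_cons hn c]
    _ = n := c.blocks_sum

/-- Splitting a sum over compositions of `n ≥ 1` by the first block. -/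
lemma sum_composition_succ (n : ℕ) (hn : 0 < n) (g : List ℕ → ℚ) :
    ∑ c : Composition n, g c.blocks
      = ∑ a ∈ Finset.Icc 1 n, ∑ c : Composition (n - a), g (a :: c.blocks) := by
  have hs := Finset.sum_sigma (s := Finset.Icc 1 n)
    (t := fun a => (Finset.univ : Finset (Composition (n - a))))
    (f := fun x => g (x.1 :: x.2.blocks))
  rw [← hs]
  refine Finset.sum_bij'
    (fun c _ => (⟨c.blocks.headI,
      ⟨c.blocks.tail, fun hi => c.blocks_pos (List.mem_of_mem_tail hi), by
        have := composition_headI_add_tail hn c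
        omega⟩⟩ : Σ a : ℕ, Composition (n - a)))
    (fun x hx =>
      ⟨x.1 :: x.2.blocks, by
        intro i hi
        rcases List.mem_cons.mp hi with rfl | hi
        · simp only [Finset.mem_sigma, Finset.mem_Icc] at hx
          omega
        · exact x.2.blocks_pos hi, by
        simp only [Finset.mem_sigma, Finset.mem_Icc] at hx
        simp only [List.sum_cons, x.2.blocks_sum]
        omega⟩)
    ?_ ?_ ?_ ?_ ?_
  · intro c _
    simp only [Finset.mem_sigma, Finset.mem_Icc, Finset.mem_univ, and_true]
    have h1 := composition_headI_pos hn c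
    have h2 := composition_headI_add_tail hn c
    omega
  · intro x hx
    exact Finset.mem_univ _
  · intro c hc
    exact Composition.ext (composition_blocks_cons hn c).symm
  · rintro ⟨a, c2⟩ hx
    rfl
  · intro c hc
    exact congrArg g (composition_blocks_cons hn c)

lemma composition_sum_eq_coeff (p : ℕ) (hp : 0 < p) :
    ∀ n, 0 < n → ∀ r, ∑ c : Composition n, (raneyChainProd p r c.blocks : ℚ)
      = PowerSeries.coeff n ((raneyF p) ^ r) := by
  intro n
  induction n using Nat.strong_induction_on with
  | _ n IH =>
    intro hn r
    rw [sum_composition_succ n hn (fun l => (raneyChainProd p r l : ℚ)),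
      coeff_raneyF_pow_rec p r n hp hn]
    apply Finset.sum_congr rfl
    intro a ha
    rw [Finset.mem_Icc] at ha
    have hunf : ∀ c : Composition (n - a), (raneyChainProd p r (a :: c.blocks) : ℚ)
        = (r.choose a : ℚ) * (raneyChainProd p (p * a) c.blocks : ℚ) := by
      intro c
      rw [raneyChainProd]
      push_cast
      ring
    simp_rw [hunf]
    rw [← Finset.mul_sum]
    congr 1
    rcases Nat.eq_zero_or_pos (n - a) with h0 | hpos
    · rw [h0]
      calc ∑ c : Composition 0, (raneyChainProd p (p * a) c.blocks : ℚ)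
          = (raneyChainProd p (p * a) [] : ℚ) := sum_composition_zero (fun l => (raneyChainProd p (p * a) l : ℚ))
        _ = 1 := by norm_num [raneyChainProd]
        _ = PowerSeries.coeff 0 ((raneyF p) ^ (p * a)) := by
            rw [coeff_raneyF_pow p hp 0 (p * a), raneyQ_zero]
    · exact IH (n - a) (by omega) hpos (p * a)

/-- The "vertical" (composition) and "horizontal" (Hilton–Pedersen) decompositions of the
Raney number agree:
`Σ_λ C(r, λ₁)·C(p·λ₁, λ₂)···C(p·λ_{j-1}, λ_j) = Σ_{i₁+⋯+i_r = n} ₚc_{i₁}···ₚc_{i_r}`. -/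
theorem composition_sum_eq_pCatalan_sum (p r n : ℕ) (hp : 0 < p) (hr : 0 < r) (hn : 0 < n) :
    ∑ c : Composition n, (raneyChainProd p r c.blocks : ℚ) =
      ∑ f ∈ Finset.Nat.antidiagonalTuple r n, ∏ i, pCatalan p (f i) := by
  rw [composition_sum_eq_coeff p hp n hn r, tupleSum_eq_coeff]
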